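/- Let μ, ν be Borel probability measures on ℝ^d and suppose there exists a sequence (y_n) in ℝ^d such that τ_{y_n} ν converges weakly to μ. Then the sequence (y_n) is bounded, and there exists y* ∈ ℝ^d such that μ = τ_{y*} ν; in particular μ and ν lie in the same translation orbit. -/

import Mathlib

open MeasureTheory Filter Topology Metric
open scoped ENNReal NNReal

section aux

variable {X : Type*} [NormedAddCommGroup X] [MeasurableSpace X] [BorelSpace X]

/-- small tails for a probability measure on a normed group -/
lemma aux_small_tail (μ : Measure X) [IsProbabilityMeasure μ] {ε : ℝ≥0∞} (hε : 0 < ε) :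
    ∃ M : ℕ, μ (closedBall 0 M)ᶜ < ε := by
  have hanti : Antitone (fun n : ℕ => (closedBall (0:X) n)ᶜ) := by
    intro m n hmn
    exact Set.compl_subset_compl.2 (closedBall_subset_closedBall (by exact_mod_cast hmn))
  have hInter : (⋂ n : ℕ, (closedBall (0:X) n)ᶜ) = ∅ := by
    rw [← Set.compl_iUnion, iUnion_closedBall_nat, Set.compl_univ]
  have h := tendsto_measure_iInter_atTop
      (μ := μ) (s := fun n : ℕ => (closedBall (0:X) n)ᶜ)
      (fun n => (measurableSet_closedBall.compl).nullMeasurableSet) hanti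
      ⟨0, measure_ne_top _ _⟩
  rw [hInter, measure_empty] at h
  obtain ⟨M, hM⟩ := (h.eventually (gt_mem_nhds hε)).exists
  exact ⟨M, hM⟩

/-- The main work, done over a general normed group with enough structure. -/
lemma aux_main [ProperSpace X] [SecondCountableTopology X]
    (μ ν : Measure X)
    [IsProbabilityMeasure μ] [IsProbabilityMeasure ν]
    (y : ℕ → X)
    (hweak : ∀ f : BoundedContinuousFunction X ℝ,
      Tendsto (fun n => ∫ x, f x ∂(ν.map (fun x => x + y n))) atTop
        (𝓝 (∫ x, f x ∂μ))) :
    (∃ C : ℝ, ∀ n, ‖y n‖ ≤ C) ∧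
      ∃ ystar : X, μ = ν.map (fun x => x + ystar) := by
  -- change of variables for the translated measure
  have hmap : ∀ (c : X) (g : BoundedContinuousFunction X ℝ),
      ∫ x, g x ∂(ν.map (fun x => x + c)) = ∫ x, g (x + c) ∂ν := by
    intro c g
    exact integral_map (measurable_add_const c).aemeasurable
      g.continuous.measurable.aestronglyMeasurable
  -- choose radii capturing most of the mass
  obtain ⟨R, hR⟩ := aux_small_tail (X := X) μ (by norm_num : (0:ℝ≥0∞) < ENNReal.ofReal (1/2))
  obtain ⟨M, hM⟩ := aux_small_tail (X := X) ν (by norm_num : (0:ℝ≥0∞) < ENNReal.ofReal (1/2))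
  -- the bump function ψ
  set ψ : X → ℝ := fun x => max 0 (min 1 (R + 1 - ‖x‖)) with hψdef
  have hψ_cont : Continuous ψ :=
    continuous_const.max (continuous_const.min (continuous_const.sub continuous_norm))
  have hψ_mem : ∀ x, ψ x ∈ Set.Icc (0:ℝ) 1 := by
    intro x
    exact ⟨le_max_left _ _, max_le (by norm_num) ((min_le_left _ _))⟩
  set ψb : BoundedContinuousFunction X ℝ :=
    ⟨⟨ψ, hψ_cont⟩, 1, fun x x' => Real.dist_le_of_mem_Icc_01 (hψ_mem x) (hψ_mem x')⟩ with hψb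
  have hψb_apply : ∀ x, ψb x = ψ x := fun _ => rfl
  have hψ_one : ∀ x : X, ‖x‖ ≤ R → ψ x = 1 := by
    intro x hx
    have h1 : (1:ℝ) ≤ R + 1 - ‖x‖ := by linarith
    simp only [hψdef, min_eq_left h1, max_eq_right (by norm_num : (0:ℝ) ≤ 1)]
  have hψ_zero : ∀ x : X, R + 1 ≤ ‖x‖ → ψ x = 0 := by
    intro x hx
    have h1 : R + 1 - ‖x‖ ≤ 0 := by linarith
    exact max_eq_left ((min_le_right _ _).trans h1)
  -- lower bound for ∫ ψ dμ
  have hμR : (1/2 : ℝ) < (μ (closedBall 0 R)).toReal := by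
    have hsum := prob_add_prob_compl (μ := μ) (measurableSet_closedBall (x := (0:X)) (ε := (R:ℝ)))
    have hsum' : (μ (closedBall (0:X) R)).toReal + (μ (closedBall (0:X) R)ᶜ).toReal = 1 := by
      rw [← ENNReal.toReal_add (measure_ne_top _ _) (measure_ne_top _ _), hsum]
      simp
    have hcompl : (μ (closedBall (0:X) R)ᶜ).toReal < 1/2 := by
      have := ENNReal.toReal_lt_of_lt_ofReal hR
      linarith [this]
    linarith
  have hlow : (1/2 : ℝ) < ∫ x, ψb x ∂μ := by
    have hind : (μ (closedBall (0:X) R)).toReal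
        = ∫ x, Set.indicator (closedBall (0:X) R) (fun _ => (1:ℝ)) x ∂μ := by
      rw [integral_indicator_const (1:ℝ) measurableSet_closedBall]; simp; rfl
    have hmono : ∫ x, Set.indicator (closedBall (0:X) R) (fun _ => (1:ℝ)) x ∂μ
        ≤ ∫ x, ψb x ∂μ := by
      refine integral_mono ((integrable_const (1:ℝ)).indicator measurableSet_closedBall)
        (ψb.integrable μ) ?_
      intro x
      by_cases hx : x ∈ closedBall (0:X) R
      · rw [Set.indicator_of_mem hx]
        show (1:ℝ) ≤ ψ x
        rw [hψ_one x (by simpa [mem_closedBall, dist_zero_right] using hx)]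
      · rw [Set.indicator_of_notMem hx]
        exact (hψ_mem x).1
    calc (1/2 : ℝ) < (μ (closedBall (0:X) R)).toReal := hμR
      _ = _ := hind
      _ ≤ _ := hmono
  -- upper bound for the translated integrals when the translation is large
  have hup : ∀ c : X, M + R + 1 < ‖c‖ → ∫ x, ψb (x + c) ∂ν < 1/2 := by
    intro c hc
    have hνM : (ν (closedBall (0:X) M)ᶜ).toReal < 1/2 := by
      have := ENNReal.toReal_lt_of_lt_ofReal hM
      linarith [this]
    have hmono : ∫ x, ψb (x + c) ∂ν
        ≤ ∫ x, Set.indicator (closedBall (0:X) M)ᶜ (fun _ => (1:ℝ)) x ∂ν := by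
      have hint : Integrable (fun x => ψb (x + c)) ν :=
        (ψb.compContinuous ⟨fun x : X => x + c, by continuity⟩).integrable ν
      refine integral_mono hint
        ((integrable_const (1:ℝ)).indicator measurableSet_closedBall.compl) ?_
      intro x
      by_cases hx : x ∈ closedBall (0:X) M
      · rw [Set.indicator_of_notMem (by simpa using hx : x ∉ (closedBall (0:X) M)ᶜ)]
        have hxn : ‖x‖ ≤ M := by simpa [mem_closedBall, dist_zero_right] using hx
        have hR1 : R + 1 ≤ ‖x + c‖ := by
          have h1 : ‖c‖ - ‖x‖ ≤ ‖x + c‖ := by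
            have := norm_sub_norm_le c (-x)
            simpa [norm_neg, sub_neg_eq_add, add_comm] using this
          linarith
        show ψ (x + c) ≤ 0
        rw [hψ_zero _ hR1]
      · rw [Set.indicator_of_mem (by simpa using hx)]
        exact (hψ_mem (x + c)).2
    have hind : ∫ x, Set.indicator (closedBall (0:X) M)ᶜ (fun _ => (1:ℝ)) x ∂ν
        = (ν (closedBall (0:X) M)ᶜ).toReal := by
      rw [integral_indicator_const (1:ℝ) measurableSet_closedBall.compl]; simp; rfl
    calc ∫ x, ψb (x + c) ∂ν ≤ _ := hmono
      _ = (ν (closedBall (0:X) M)ᶜ).toReal := hind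
      _ < 1/2 := hνM
  -- eventually the translations are bounded by M + R + 1
  have hev : ∀ᶠ n in atTop, ‖y n‖ ≤ M + R + 1 := by
    have h1 := (hweak ψb).eventually (eventually_gt_nhds hlow)
    filter_upwards [h1] with n hn
    by_contra hcon
    push_neg at hcon
    have h2 := hup (y n) hcon
    rw [hmap (y n) ψb] at hn
    linarith
  obtain ⟨N, hN⟩ := eventually_atTop.1 hev
  -- boundedness
  have hbdd : ∃ C : ℝ, ∀ n, ‖y n‖ ≤ C := by
    obtain ⟨C0, hC0⟩ := (Set.finite_range fun i : Fin N => ‖y i‖).bddAbove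
    refine ⟨max (M + R + 1) C0, fun n => ?_⟩
    rcases lt_or_ge n N with h | h
    · exact le_max_of_le_right (hC0 ⟨⟨n, h⟩, rfl⟩)
    · exact le_max_of_le_left (hN n h)
  obtain ⟨C, hC⟩ := hbdd
  refine ⟨⟨C, hC⟩, ?_⟩
  -- extract a convergent subsequence
  have hCnn : ∀ n, y n ∈ closedBall (0:X) C := by
    intro n; simpa [mem_closedBall, dist_zero_right] using hC n
  obtain ⟨a, -, φ, hφmono, hφtend⟩ :=
    tendsto_subseq_of_bounded (isBounded_closedBall (x := (0:X)) (r := C)) hCnn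
  refine ⟨a, ?_⟩
  -- equality of the two measures via bounded continuous functions
  have key : ∀ g : BoundedContinuousFunction X ℝ,
      ∫ x, g x ∂μ = ∫ x, g x ∂(ν.map (fun x => x + a)) := by
    intro g
    rw [hmap a g]
    have h1 : Tendsto (fun k => ∫ x, g (x + y (φ k)) ∂ν) atTop (𝓝 (∫ x, g x ∂μ)) := by
      have := (hweak g).comp hφmono.tendsto_atTop
      simpa only [Function.comp_def, hmap] using this
    have h2 : Tendsto (fun k => ∫ x, g (x + y (φ k)) ∂ν) atTop (𝓝 (∫ x, g (x + a) ∂ν)) := by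
      refine tendsto_integral_of_dominated_convergence (fun _ => ‖g‖) ?_ (integrable_const _)
        ?_ ?_
      · intro k
        exact (g.continuous.comp (continuous_id.add continuous_const)).aestronglyMeasurable
      · intro k
        exact Eventually.of_forall fun x => g.norm_coe_le_norm _
      · exact Eventually.of_forall fun x =>
          (g.continuous.tendsto _).comp (tendsto_const_nhds.add hφtend)
    exact tendsto_nhds_unique h1 h2
  -- from real integrals to lintegrals of `ℝ≥0`-valued functions
  refine ext_of_forall_lintegral_eq_of_IsFiniteMeasure fun f => ?_
  have hiso : Isometry ((↑) : ℝ≥0 → ℝ) := fun _ _ => rfl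
  set g : BoundedContinuousFunction X ℝ :=
    BoundedContinuousFunction.comp _ hiso.lipschitz f with hg
  have hg_apply : ∀ x, g x = (f x : ℝ) := fun _ => rfl
  have h1 := BoundedContinuousFunction.toReal_lintegral_coe_eq_integral f μ
  have h2 := BoundedContinuousFunction.toReal_lintegral_coe_eq_integral f
    (ν.map (fun x => x + a))
  have hgg : ∫ x, g x ∂μ = ∫ x, g x ∂(ν.map (fun x => x + a)) := key g
  have htr : (∫⁻ x, (f x : ℝ≥0∞) ∂μ).toReal
      = (∫⁻ x, (f x : ℝ≥0∞) ∂(ν.map (fun x => x + a))).toReal := by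
    rw [h1, h2]
    simpa only [hg_apply] using hgg
  exact (ENNReal.toReal_eq_toReal_iff' (f.lintegral_lt_top_of_nnreal μ).ne
    (f.lintegral_lt_top_of_nnreal _).ne).1 htr

end aux

/-- If translates `τ_{yₙ} ν` of a probability measure `ν` on `ℝ^d` converge weakly to a
probability measure `μ` (i.e. against every bounded continuous test function), then the sequence
`(yₙ)` is bounded and `μ = τ_{y*} ν` for some `y*`; in particular `μ` and `ν` lie in the same
translation orbit. -/
theorem stmt_4 (d : ℕ) (μ ν : Measure (EuclideanSpace ℝ (Fin d)))
    [IsProbabilityMeasure μ] [IsProbabilityMeasure ν]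
    (y : ℕ → EuclideanSpace ℝ (Fin d))
    (hweak : ∀ f : BoundedContinuousFunction (EuclideanSpace ℝ (Fin d)) ℝ,
      Tendsto (fun n => ∫ x, f x ∂(ν.map (fun x => x + y n))) atTop
        (𝓝 (∫ x, f x ∂μ))) :
    (∃ C : ℝ, ∀ n, ‖y n‖ ≤ C) ∧
      ∃ ystar : EuclideanSpace ℝ (Fin d), μ = ν.map (fun x => x + ystar) := by
  exact aux_main μ ν y hweak
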